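/- arXiv:0806.3809 — 2 statements merged into one kernel-verified Lean document; each statement's English description precedes it below -/
import Mathlib

section
/- Let r, b, s, m, k be positive integers with gcd(b, r) = 1, r = s·m, q = s·k, gcd(m, k) = 1, and 0 < q < r. For an integer x let x̄ denote the least nonnegative residue of x mod r. Then the sum Ξ := Σ_{l=1}^{m-1} ( -(q·l mod r)·(r²−1)/(12r) + Σ_{j=1}^{(q·l mod r)−1} (b·j mod r)·(r − (b·j mod r))/(2r) ) equals −(m²−1)·r/(24m). -/
open Finset

/-- Orbifold Riemann–Roch correction term `c_P(qK)` at a cyclic quotient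
singularity of type `(1/r)(1,-1,b)`. -/
def cTerm (r b q : ℕ) : ℚ :=
  -(q : ℚ) * ((r : ℚ) ^ 2 - 1) / (12 * (r : ℚ)) +
    ∑ j ∈ Finset.Icc 1 (q - 1),
      ((b * j % r : ℕ) : ℚ) * ((r : ℚ) - ((b * j % r : ℕ) : ℚ)) / (2 * (r : ℚ))

private def Fq (r x : ℕ) : ℚ := (x : ℚ) * ((r : ℚ) - (x : ℚ)) / (2 * (r : ℚ))

private lemma cTerm_eq (r b n : ℕ) :
    cTerm r b n = -(n : ℚ) * ((r : ℚ) ^ 2 - 1) / (12 * (r : ℚ)) +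
      ∑ j ∈ Finset.Icc 1 (n - 1), Fq r (b * j % r) := rfl

private lemma sumIdQ (n : ℕ) : ∑ x ∈ Finset.range n, (x : ℚ) = n * ((n : ℚ) - 1) / 2 := by
  induction n with
  | zero => simp
  | succ n ih => rw [Finset.sum_range_succ, ih]; push_cast; ring

private lemma sumSqQ (n : ℕ) :
    ∑ x ∈ Finset.range n, (x : ℚ) ^ 2 = n * ((n : ℚ) - 1) * (2 * n - 1) / 6 := by
  induction n with
  | zero => simp
  | succ n ih => rw [Finset.sum_range_succ, ih]; push_cast; ring

private lemma icc_sum_eq_range (n : ℕ) (f : ℕ → ℚ) (h0 : f 0 = 0) :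
    ∑ x ∈ Finset.Icc 1 (n - 1), f x = ∑ x ∈ Finset.range n, f x := by
  have h : Finset.Icc 1 (n - 1) = (Finset.range n).erase 0 := by
    ext x
    simp only [Finset.mem_Icc, Finset.mem_erase, Finset.mem_range]
    omega
  rw [h, Finset.sum_erase _ h0]

private lemma sumFQ (n : ℕ) :
    ∑ x ∈ Finset.Icc 1 (n - 1), (x : ℚ) * ((n : ℚ) - (x : ℚ))
      = (n : ℚ) * ((n : ℚ) ^ 2 - 1) / 6 := by
  rw [icc_sum_eq_range n _ (by ring)]
  have h : ∀ x : ℕ, (x : ℚ) * ((n : ℚ) - (x : ℚ)) = (n : ℚ) * (x : ℚ) - (x : ℚ) ^ 2 := by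
    intro x; ring
  simp_rw [h]
  rw [Finset.sum_sub_distrib, ← Finset.mul_sum, sumIdQ, sumSqQ]
  ring

/-- Reindexing a sum over `Icc 1 (n-1)` along `x ↦ a*x % n` for `a` coprime to `n`. -/
private lemma sum_mulmod (n a : ℕ) (ha : Nat.Coprime a n) (f : ℕ → ℚ) :
    ∑ x ∈ Finset.Icc 1 (n - 1), f (a * x % n) = ∑ x ∈ Finset.Icc 1 (n - 1), f x := by
  rcases Nat.lt_or_ge n 2 with hn | hn
  · interval_cases n <;> simp
  have hn0 : 0 < n := by omega
  obtain ⟨a', -, ha'⟩ := Nat.exists_mul_mod_eq_one_of_coprime ha hn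
  have hcop' : Nat.Coprime a' n := by
    have h1 : a * a' = n * (a * a' / n) + a * a' % n := (Nat.div_add_mod _ _).symm
    rw [ha'] at h1
    have d1 : Nat.gcd a' n ∣ a * a' := Dvd.dvd.mul_left (Nat.gcd_dvd_left a' n) a
    have d2 : Nat.gcd a' n ∣ n * (a * a' / n) :=
      Dvd.dvd.mul_right (Nat.gcd_dvd_right a' n) _
    have hsub : a * a' - n * (a * a' / n) = 1 := by omega
    have d3 : Nat.gcd a' n ∣ 1 := hsub ▸ Nat.dvd_sub d1 d2
    exact Nat.dvd_one.mp d3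
  have hmem : ∀ c : ℕ, Nat.Coprime c n → ∀ x ∈ Finset.Icc 1 (n - 1),
      c * x % n ∈ Finset.Icc 1 (n - 1) := by
    intro c hc x hx
    simp only [Finset.mem_Icc] at hx ⊢
    have hlt : c * x % n < n := Nat.mod_lt _ hn0
    have hne : c * x % n ≠ 0 := by
      intro h0
      have hdvd : n ∣ c * x := Nat.dvd_of_mod_eq_zero h0
      have : n ∣ x := (Nat.Coprime.symm hc).dvd_of_dvd_mul_left hdvd
      have := Nat.le_of_dvd (by omega) this
      omega
    omega
  have hinv : ∀ c c' : ℕ, c * c' % n = 1 → ∀ x, x < n → c' * (c * x % n) % n = x := by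
    intro c c' h1 x hx
    have e1 : c' * (c * x % n) ≡ c * c' * x [MOD n] := by
      calc c' * (c * x % n) ≡ c' * (c * x) [MOD n] := (Nat.mod_modEq (c * x) n).mul_left c'
        _ = c * c' * x := by ring
    have e2 : c * c' * x ≡ 1 * x [MOD n] := by
      refine Nat.ModEq.mul_right x ?_
      show c * c' % n = 1 % n
      rw [h1, Nat.mod_eq_of_lt hn]
    calc c' * (c * x % n) % n = c * c' * x % n := e1
      _ = 1 * x % n := e2
      _ = x := by rw [one_mul, Nat.mod_eq_of_lt hx]
  have ha'2 : a' * a % n = 1 := by rw [mul_comm]; exact ha'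
  refine Finset.sum_nbij' (fun x => a * x % n) (fun y => a' * y % n)
    (hmem a ha) (hmem a' hcop') ?_ ?_ ?_
  · intro x hx
    simp only [Finset.mem_Icc] at hx
    exact hinv a a' ha' x (by omega)
  · intro y hy
    simp only [Finset.mem_Icc] at hy
    exact hinv a' a ha'2 y (by omega)
  · intro x _; rfl

private lemma sum_reflect (n : ℕ) (f : ℕ → ℚ) :
    ∑ x ∈ Finset.Icc 1 (n - 1), f x = ∑ x ∈ Finset.Icc 1 (n - 1), f (n - x) := by
  refine Finset.sum_nbij' (fun x => n - x) (fun x => n - x) ?_ ?_ ?_ ?_ ?_ <;>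
    intro x hx <;> simp only [Finset.mem_Icc] at hx ⊢ <;> try omega
  congr 1
  omega

theorem stmt0 (r b s m k q : ℕ) (hr : 0 < r) (hb : 0 < b) (hs : 0 < s)
    (hm : 0 < m) (hk : 0 < k) (hbr : Nat.gcd b r = 1) (hrm : r = s * m)
    (hq : q = s * k) (hmk : Nat.gcd m k = 1) (hq0 : 0 < q) (hqr : q < r) :
    ∑ l ∈ Finset.Icc 1 (m - 1), cTerm r b (q * l % r) =
      -(((m : ℚ) ^ 2 - 1) * (r : ℚ)) / (24 * (m : ℚ)) := by
  -- basic positivity and coprimality facts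
  have hm2 : 2 ≤ m := by
    by_contra h
    push_neg at h
    interval_cases m
    · have : s ≤ s * k := Nat.le_mul_of_pos_right s hk
      omega
  have hbm : Nat.Coprime b m := Nat.Coprime.coprime_dvd_right ⟨s, by rw [hrm]; ring⟩ hbr
  have hr0 : (r : ℚ) ≠ 0 := Nat.cast_ne_zero.mpr (by omega)
  have hm0 : (m : ℚ) ≠ 0 := Nat.cast_ne_zero.mpr (by omega)
  have hs0 : (s : ℚ) ≠ 0 := Nat.cast_ne_zero.mpr (by omega)
  have hr' : (r : ℚ) = (s : ℚ) * (m : ℚ) := by rw [hrm]; push_cast; ring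
  -- Step 1: reindex l ↦ k*l % m
  have hql : ∀ l : ℕ, q * l % r = s * (k * l % m) := by
    intro l
    rw [hq, hrm, mul_assoc, Nat.mul_mod_mul_left]
  have step1 : ∑ l ∈ Finset.Icc 1 (m - 1), cTerm r b (q * l % r)
      = ∑ t ∈ Finset.Icc 1 (m - 1), cTerm r b (s * t) := by
    simp_rw [hql]
    exact sum_mulmod m k (Nat.Coprime.symm hmk) (fun t => cTerm r b (s * t))
  rw [step1]
  simp_rw [cTerm_eq]
  rw [Finset.sum_add_distrib]
  -- Part 1 : the linear part
  have hsum_t : ∑ t ∈ Finset.Icc 1 (m - 1), (t : ℚ) = (m : ℚ) * ((m : ℚ) - 1) / 2 := by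
    rw [icc_sum_eq_range m _ (by norm_num), sumIdQ]
  have part1 : ∑ t ∈ Finset.Icc 1 (m - 1),
      (-((s * t : ℕ) : ℚ) * ((r : ℚ) ^ 2 - 1) / (12 * (r : ℚ)))
      = -((s : ℚ) * ((m : ℚ) * ((m : ℚ) - 1) / 2)) * ((r : ℚ) ^ 2 - 1) / (12 * (r : ℚ)) := by
    have h : ∀ t : ℕ, -((s * t : ℕ) : ℚ) * ((r : ℚ) ^ 2 - 1) / (12 * (r : ℚ))
        = (-(s : ℚ) * ((r : ℚ) ^ 2 - 1) / (12 * (r : ℚ))) * (t : ℚ) := by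
      intro t; push_cast; ring
    simp_rw [h]
    rw [← Finset.mul_sum, hsum_t]
    ring
  rw [part1]
  -- Part 2 : the double sum, swapped
  have hstr : ∀ t ∈ Finset.Icc 1 (m - 1), s * t ≤ r ∧ 1 ≤ s * t := by
    intro t ht
    simp only [Finset.mem_Icc] at ht
    have h1 : s * t ≤ s * (m - 1) := Nat.mul_le_mul_left s ht.2
    have h2 : s * (m - 1) + s = s * m := by
      rw [← Nat.mul_succ]
      congr 1
      omega
    have h3 : 1 ≤ s * t := Nat.one_le_iff_ne_zero.mpr (Nat.mul_ne_zero (by omega) (by omega))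
    omega
  have T_eq : ∑ t ∈ Finset.Icc 1 (m - 1), ∑ j ∈ Finset.Icc 1 (s * t - 1), Fq r (b * j % r)
      = ∑ j ∈ Finset.Icc 1 (r - 1), ((m - 1 - j / s : ℕ) : ℚ) * Fq r (b * j % r) := by
    have h1 : ∀ t ∈ Finset.Icc 1 (m - 1),
        ∑ j ∈ Finset.Icc 1 (s * t - 1), Fq r (b * j % r)
        = ∑ j ∈ Finset.Icc 1 (r - 1), if j < s * t then Fq r (b * j % r) else 0 := by
      intro t ht
      obtain ⟨hle, hge⟩ := hstr t ht
      rw [← Finset.sum_filter]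
      congr 1
      ext j
      simp only [Finset.mem_filter, Finset.mem_Icc]
      omega
    rw [Finset.sum_congr rfl h1, Finset.sum_comm]
    refine Finset.sum_congr rfl ?_
    intro j hj
    simp only [Finset.mem_Icc] at hj
    rw [← Finset.sum_filter]
    obtain ⟨a1, ha1⟩ : ∃ x, j / s = x := ⟨_, rfl⟩
    have hfil : Finset.filter (fun t => j < s * t) (Finset.Icc 1 (m - 1))
        = Finset.Icc (a1 + 1) (m - 1) := by
      ext t
      simp only [Finset.mem_filter, Finset.mem_Icc]
      have hiff : j < s * t ↔ a1 < t := by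
        rw [← ha1, Nat.div_lt_iff_lt_mul hs, mul_comm]
      rw [hiff]
      omega
    rw [hfil, Finset.sum_const, Nat.card_Icc, nsmul_eq_mul]
    congr 2
    rw [ha1]
    omega
  rw [T_eq]
  -- positivity of b*j % r
  have hmodpos : ∀ j, 1 ≤ j → j ≤ r - 1 → 0 < b * j % r := by
    intro j h1 h2
    rcases Nat.eq_zero_or_pos (b * j % r) with h0 | h0
    · exfalso
      have hdvd : r ∣ b * j := Nat.dvd_of_mod_eq_zero h0
      have : r ∣ j := (Nat.Coprime.symm hbr).dvd_of_dvd_mul_left hdvd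
      have := Nat.le_of_dvd (by omega) this
      omega
    · exact h0
  -- reflection property of b*j % r
  have hflip : ∀ j, 1 ≤ j → j ≤ r - 1 → b * (r - j) % r = r - b * j % r := by
    intro j h1 h2
    have hx := hmodpos j h1 h2
    have hxlt : b * j % r < r := Nat.mod_lt _ hr
    have hult : b * (r - j) % r < r := Nat.mod_lt _ hr
    have hadd : (b * (r - j) % r + b * j % r) % r = 0 := by
      calc (b * (r - j) % r + b * j % r) % r = (b * (r - j) + b * j) % r :=
            (Nat.add_mod _ _ _).symm
        _ = (b * r) % r := by rw [← Nat.mul_add, Nat.sub_add_cancel (by omega : j ≤ r)]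
        _ = (r * b) % r := by rw [mul_comm]
        _ = 0 := Nat.mul_mod_right r b
    obtain ⟨c, hcc⟩ := Nat.dvd_of_mod_eq_zero hadd
    have hcb : c < 2 := by
      by_contra hh
      push_neg at hh
      have h22 : r * 2 ≤ r * c := Nat.mul_le_mul_left r hh
      rw [← hcc] at h22
      omega
    interval_cases c <;> omega
  have key2 : ∀ j, 1 ≤ j → j ≤ r - 1 → Fq r (b * (r - j) % r) = Fq r (b * j % r) := by
    intro j h1 h2
    rw [hflip j h1 h2]
    have hx := hmodpos j h1 h2
    have hxlt : b * j % r < r := Nat.mod_lt _ hr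
    unfold Fq
    rw [Nat.cast_sub (le_of_lt hxlt)]
    ring
  -- the division identity for reflections
  have hdivnat : ∀ j, 1 ≤ j → j ≤ r - 1 → ∃ a1 a2 : ℕ, j / s = a1 ∧ (r - j) / s = a2 ∧
      a1 ≤ m - 1 ∧ a2 ≤ m - 1 ∧ a1 + a2 + (if s ∣ j then 0 else 1) = m := by
    intro j h1 h2
    obtain ⟨a1, ha1⟩ : ∃ x, j / s = x := ⟨_, rfl⟩
    obtain ⟨a2, ha2⟩ : ∃ x, (r - j) / s = x := ⟨_, rfl⟩
    obtain ⟨c1, hc1⟩ : ∃ x, j % s = x := ⟨_, rfl⟩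
    obtain ⟨c2, hc2⟩ : ∃ x, (r - j) % s = x := ⟨_, rfl⟩
    refine ⟨a1, a2, ha1, ha2, ?_, ?_, ?_⟩
    · have h3 : j / s < m := (Nat.div_lt_iff_lt_mul hs).mpr (by rw [mul_comm, ← hrm]; omega)
      rw [ha1] at h3
      omega
    · have h3 : (r - j) / s < m :=
        (Nat.div_lt_iff_lt_mul hs).mpr (by rw [mul_comm, ← hrm]; omega)
      rw [ha2] at h3
      omega
    · have hc := Nat.div_add_mod j s
      have hc' := Nat.div_add_mod (r - j) s
      rw [ha1, hc1] at hc
      rw [ha2, hc2] at hc'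
      have hl1 : j % s < s := Nat.mod_lt _ hs
      have hl2 : (r - j) % s < s := Nat.mod_lt _ hs
      rw [hc1] at hl1
      rw [hc2] at hl2
      have hsum : s * (a1 + a2) + (c1 + c2) = s * m := by
        rw [Nat.mul_add, ← hrm]
        omega
      have hdvd2 : s ∣ (c1 + c2) := by
        have h4 := Nat.mul_add_mod s (a1 + a2) (c1 + c2)
        rw [hsum, Nat.mul_mod_right] at h4
        exact Nat.dvd_of_mod_eq_zero h4.symm
      obtain ⟨d, hd⟩ := hdvd2
      have hd2 : d < 2 := by
        by_contra hh
        push_neg at hh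
        have h5 : s * 2 ≤ s * d := Nat.mul_le_mul_left s hh
        rw [← hd] at h5
        omega
      interval_cases d
      · have hjz : j % s = 0 := by omega
        have h6 : s * (a1 + a2) = s * m := by omega
        have hA := Nat.eq_of_mul_eq_mul_left hs h6
        simp only [Nat.dvd_of_mod_eq_zero hjz, if_true]
        omega
      · have hjz : ¬ s ∣ j := by
          intro hdj
          have h7 : j % s = 0 := Nat.mod_eq_zero_of_dvd hdj
          omega
        have h6 : s * (a1 + a2 + 1) = s * m := by
          rw [Nat.mul_add, Nat.mul_one]
          omega
        have hA := Nat.eq_of_mul_eq_mul_left hs h6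
        simp only [hjz, if_false]
        omega
  -- cast version of the weight sum
  have hwsum : ∀ j, 1 ≤ j → j ≤ r - 1 →
      ((m - 1 - j / s : ℕ) : ℚ) + ((m - 1 - (r - j) / s : ℕ) : ℚ)
        = ((m : ℚ) - 1) - (if s ∣ j then (1 : ℚ) else 0) := by
    intro j h1 h2
    obtain ⟨a1, a2, e1, e2, b1, b2, hsum⟩ := hdivnat j h1 h2
    rw [e1, e2]
    rw [Nat.cast_sub b1, Nat.cast_sub b2, Nat.cast_sub (by omega : 1 ≤ m)]
    by_cases hd : s ∣ j
    · simp only [hd, if_true] at hsum ⊢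
      have h9 : a1 + a2 = m := by omega
      have h10 : (a1 : ℚ) + (a2 : ℚ) = (m : ℚ) := by exact_mod_cast h9
      push_cast
      linarith
    · simp only [hd, if_false] at hsum ⊢
      have h9 : a1 + a2 + 1 = m := by omega
      have h10 : (a1 : ℚ) + (a2 : ℚ) + 1 = (m : ℚ) := by exact_mod_cast h9
      push_cast
      linarith
  -- the doubled sum
  have hS2 : (2 : ℚ) * (∑ j ∈ Finset.Icc 1 (r - 1), ((m - 1 - j / s : ℕ) : ℚ) * Fq r (b * j % r))
      = ((m : ℚ) - 1) * (∑ j ∈ Finset.Icc 1 (r - 1), Fq r (b * j % r))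
        - ∑ j ∈ Finset.Icc 1 (r - 1), (if s ∣ j then Fq r (b * j % r) else 0) := by
    have hre : ∑ j ∈ Finset.Icc 1 (r - 1), ((m - 1 - j / s : ℕ) : ℚ) * Fq r (b * j % r)
        = ∑ j ∈ Finset.Icc 1 (r - 1), ((m - 1 - (r - j) / s : ℕ) : ℚ) * Fq r (b * j % r) := by
      rw [sum_reflect r (fun j => ((m - 1 - j / s : ℕ) : ℚ) * Fq r (b * j % r))]
      refine Finset.sum_congr rfl ?_
      intro j hj
      simp only [Finset.mem_Icc] at hj
      rw [key2 j hj.1 hj.2]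
    calc (2 : ℚ) * (∑ j ∈ Finset.Icc 1 (r - 1), ((m - 1 - j / s : ℕ) : ℚ) * Fq r (b * j % r))
        = (∑ j ∈ Finset.Icc 1 (r - 1), ((m - 1 - j / s : ℕ) : ℚ) * Fq r (b * j % r))
          + ∑ j ∈ Finset.Icc 1 (r - 1), ((m - 1 - (r - j) / s : ℕ) : ℚ) * Fq r (b * j % r) := by
          rw [← hre]; ring
      _ = ∑ j ∈ Finset.Icc 1 (r - 1),
            ((((m - 1 - j / s : ℕ) : ℚ) + ((m - 1 - (r - j) / s : ℕ) : ℚ)) * Fq r (b * j % r)) := by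
          rw [← Finset.sum_add_distrib]
          refine Finset.sum_congr rfl ?_
          intro j _
          ring
      _ = ∑ j ∈ Finset.Icc 1 (r - 1),
            ((((m : ℚ) - 1) - (if s ∣ j then (1 : ℚ) else 0)) * Fq r (b * j % r)) := by
          refine Finset.sum_congr rfl ?_
          intro j hj
          simp only [Finset.mem_Icc] at hj
          rw [hwsum j hj.1 hj.2]
      _ = ((m : ℚ) - 1) * (∑ j ∈ Finset.Icc 1 (r - 1), Fq r (b * j % r))
            - ∑ j ∈ Finset.Icc 1 (r - 1), (if s ∣ j then Fq r (b * j % r) else 0) := by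
          rw [Finset.mul_sum, ← Finset.sum_sub_distrib]
          refine Finset.sum_congr rfl ?_
          intro j _
          by_cases hd : s ∣ j <;> simp [hd] <;> ring
  -- evaluate the full sum A
  have hA : ∑ j ∈ Finset.Icc 1 (r - 1), Fq r (b * j % r) = ((r : ℚ) ^ 2 - 1) / 12 := by
    rw [sum_mulmod r b hbr (Fq r)]
    unfold Fq
    rw [← Finset.sum_div, sumFQ r]
    field_simp
    ring
  -- evaluate the divisible sum B
  have hB : ∑ j ∈ Finset.Icc 1 (r - 1), (if s ∣ j then Fq r (b * j % r) else 0)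
      = (s : ℚ) * ((m : ℚ) ^ 2 - 1) / 12 := by
    rw [← Finset.sum_filter]
    have hbij : ∑ j ∈ Finset.filter (fun j => s ∣ j) (Finset.Icc 1 (r - 1)), Fq r (b * j % r)
        = ∑ t ∈ Finset.Icc 1 (m - 1), Fq r (b * (s * t) % r) := by
      refine Finset.sum_nbij' (fun j => j / s) (fun t => s * t) ?_ ?_ ?_ ?_ ?_
      · intro j hj
        simp only [Finset.mem_filter, Finset.mem_Icc] at hj
        obtain ⟨⟨hj1, hj2⟩, hjd⟩ := hj
        simp only [Finset.mem_Icc]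
        constructor
        · exact (Nat.one_le_div_iff hs).mpr (Nat.le_of_dvd (by omega) hjd)
        · have h3 : j / s < m := (Nat.div_lt_iff_lt_mul hs).mpr (by rw [mul_comm, ← hrm]; omega)
          omega
      · intro t ht
        simp only [Finset.mem_Icc] at ht
        simp only [Finset.mem_filter, Finset.mem_Icc]
        obtain ⟨hle, hge⟩ := hstr t (by simp only [Finset.mem_Icc]; exact ht)
        have hne : s * t ≠ r := by
          intro he
          have h4 : s * t ≤ s * (m - 1) := Nat.mul_le_mul_left s ht.2
          have h5 : s * (m - 1) + s = s * m := by
            rw [← Nat.mul_succ]; congr 1; omega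
          rw [← hrm] at h5
          omega
        exact ⟨⟨hge, by omega⟩, ⟨t, rfl⟩⟩
      · intro j hj
        simp only [Finset.mem_filter, Finset.mem_Icc] at hj
        exact Nat.mul_div_cancel' hj.2
      · intro t _
        exact Nat.mul_div_cancel_left t hs
      · intro j hj
        simp only [Finset.mem_filter, Finset.mem_Icc] at hj
        rw [Nat.mul_div_cancel' hj.2]
    rw [hbij]
    have hmod : ∀ t : ℕ, b * (s * t) % r = s * (b * t % m) := by
      intro t
      rw [hrm, show b * (s * t) = s * (b * t) by ring, Nat.mul_mod_mul_left]
    simp_rw [hmod]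
    rw [sum_mulmod m b hbm (fun u => Fq r (s * u))]
    have hterm : ∀ u : ℕ, Fq r (s * u)
        = ((s : ℚ) / (2 * (m : ℚ))) * ((u : ℚ) * ((m : ℚ) - (u : ℚ))) := by
      intro u
      unfold Fq
      rw [show ((s * u : ℕ) : ℚ) = (s : ℚ) * (u : ℚ) by push_cast; ring, hr']
      field_simp
    simp_rw [hterm]
    rw [← Finset.mul_sum, sumFQ m]
    field_simp
    ring
  -- final assembly
  have hSval : ∑ j ∈ Finset.Icc 1 (r - 1), ((m - 1 - j / s : ℕ) : ℚ) * Fq r (b * j % r)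
      = (((m : ℚ) - 1) * (((r : ℚ) ^ 2 - 1) / 12) - (s : ℚ) * ((m : ℚ) ^ 2 - 1) / 12) / 2 := by
    rw [hA, hB] at hS2
    linarith
  rw [hSval, hr']
  field_simp
  ring
end

section
/- Suppose m is a prime, r₁,…,r_n are positive integers each divisible by m, and (m+1)·(r₁+⋯+r_n) = 12m. Then m ∈ {2, 3, 5, 11}, and moreover the multiset {r₁,…,r_n} is one of: for m=2: {8}, {2,6}, {4,4}, {2,2,4}, {2,2,2,2}; for m=3: {9}, {3,3,3}, {3,6}; for m=5: {5,5}, {10}; for m=11: {11}. -/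
private lemma part0 (s : Multiset ℕ) (hpos : ∀ r ∈ s, 0 < r) (h : s.sum = 0) : s = 0 := by
  rw [Multiset.eq_zero_iff_forall_notMem]
  intro a ha
  have := hpos a ha
  have := Multiset.single_le_sum (fun x _ => Nat.zero_le x) a ha
  omega

private lemma exists_cons (s : Multiset ℕ) (h : s.sum ≠ 0) : ∃ a t, s = a ::ₘ t := by
  rcases s.empty_or_exists_mem with h0 | ⟨a, ha⟩
  · simp [h0] at h
  · exact ⟨a, _, (Multiset.cons_erase ha).symm⟩

private lemma part1 (s : Multiset ℕ) (hpos : ∀ r ∈ s, 0 < r) (h : s.sum = 1) :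
    s = {1} := by
  obtain ⟨a, t, rfl⟩ := exists_cons s (by omega)
  simp only [Multiset.sum_cons] at h
  have ha : 0 < a := hpos a (Multiset.mem_cons_self a t)
  have hpt : ∀ r ∈ t, 0 < r := fun r hr => hpos r (Multiset.mem_cons_of_mem hr)
  have hub : a ≤ 1 := by omega
  interval_cases a
  · have := part0 t hpt (by omega); subst this; rfl

private lemma part2 (s : Multiset ℕ) (hpos : ∀ r ∈ s, 0 < r) (h : s.sum = 2) :
    s = {2} ∨ s = {1, 1} := by
  obtain ⟨a, t, rfl⟩ := exists_cons s (by omega)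
  simp only [Multiset.sum_cons] at h
  have ha : 0 < a := hpos a (Multiset.mem_cons_self a t)
  have hpt : ∀ r ∈ t, 0 < r := fun r hr => hpos r (Multiset.mem_cons_of_mem hr)
  have hub : a ≤ 2 := by omega
  interval_cases a
  · have := part1 t hpt (by omega); subst this; right; rfl
  · have := part0 t hpt (by omega); subst this; left; rfl

private lemma part3 (s : Multiset ℕ) (hpos : ∀ r ∈ s, 0 < r) (h : s.sum = 3) :
    s = {3} ∨ s = {1, 2} ∨ s = {1, 1, 1} := by
  obtain ⟨a, t, rfl⟩ := exists_cons s (by omega)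
  simp only [Multiset.sum_cons] at h
  have ha : 0 < a := hpos a (Multiset.mem_cons_self a t)
  have hpt : ∀ r ∈ t, 0 < r := fun r hr => hpos r (Multiset.mem_cons_of_mem hr)
  have hub : a ≤ 3 := by omega
  interval_cases a
  · rcases part2 t hpt (by omega) with rfl | rfl
    · right; left; rfl
    · right; right; rfl
  · have := part1 t hpt (by omega); subst this; right; left; decide
  · have := part0 t hpt (by omega); subst this; left; rfl

private lemma part4 (s : Multiset ℕ) (hpos : ∀ r ∈ s, 0 < r) (h : s.sum = 4) :
    s = {4} ∨ s = {1, 3} ∨ s = {2, 2} ∨ s = {1, 1, 2} ∨ s = {1, 1, 1, 1} := by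
  obtain ⟨a, t, rfl⟩ := exists_cons s (by omega)
  simp only [Multiset.sum_cons] at h
  have ha : 0 < a := hpos a (Multiset.mem_cons_self a t)
  have hpt : ∀ r ∈ t, 0 < r := fun r hr => hpos r (Multiset.mem_cons_of_mem hr)
  have hub : a ≤ 4 := by omega
  interval_cases a
  · rcases part3 t hpt (by omega) with rfl | rfl | rfl
    · right; left; rfl
    · right; right; right; left; rfl
    · right; right; right; right; rfl
  · rcases part2 t hpt (by omega) with rfl | rfl
    · right; right; left; rfl
    · right; right; right; left; decide
  · have := part1 t hpt (by omega); subst this; right; left; decide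
  · have := part0 t hpt (by omega); subst this; left; rfl

private lemma quot (m : ℕ) (hm : 0 < m) (s : Multiset ℕ)
    (hpos : ∀ r ∈ s, 0 < r) (hdvd : ∀ r ∈ s, m ∣ r) :
    ∃ t : Multiset ℕ, (∀ q ∈ t, 0 < q) ∧ m * t.sum = s.sum ∧ s = t.map (fun q => m * q) := by
  refine ⟨s.map (fun r => r / m), ?_, ?_, ?_⟩
  · intro q hq
    obtain ⟨r, hr, rfl⟩ := Multiset.mem_map.mp hq
    exact Nat.div_pos (Nat.le_of_dvd (hpos r hr) (hdvd r hr)) hm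
  · induction s using Multiset.induction_on with
    | empty => simp
    | cons a u ih =>
      have hd := hdvd a (Multiset.mem_cons_self a u)
      simp only [Multiset.map_cons, Multiset.sum_cons, Nat.mul_add,
        Nat.mul_div_cancel' hd]
      rw [ih (fun r hr => hpos r (Multiset.mem_cons_of_mem hr))
        (fun r hr => hdvd r (Multiset.mem_cons_of_mem hr))]
  · rw [Multiset.map_map]
    symm
    calc s.map _ = s.map id := Multiset.map_congr rfl (fun r hr => Nat.mul_div_cancel' (hdvd r hr))
    _ = s := Multiset.map_id s

theorem stmt4 (m : ℕ) (hm : m.Prime) (s : Multiset ℕ)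
    (hpos : ∀ r ∈ s, 0 < r) (hdvd : ∀ r ∈ s, m ∣ r)
    (hsum : (m + 1) * s.sum = 12 * m) :
    m ∈ ({2, 3, 5, 11} : Set ℕ) ∧
    (m = 2 → s = {8} ∨ s = {2, 6} ∨ s = {4, 4} ∨ s = {2, 2, 4} ∨ s = {2, 2, 2, 2}) ∧
    (m = 3 → s = {9} ∨ s = {3, 3, 3} ∨ s = {3, 6}) ∧
    (m = 5 → s = {5, 5} ∨ s = {10}) ∧
    (m = 11 → s = {11}) := by
  have hdvd12 : (m + 1) ∣ 12 := by
    have h1 : (m + 1) ∣ 12 * m := ⟨s.sum, hsum.symm⟩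
    have hc : Nat.Coprime (m + 1) m := by simp [Nat.Coprime, Nat.add_comm m 1, Nat.gcd_add_self_right]
    exact hc.dvd_of_dvd_mul_right h1
  have hm2 := hm.two_le
  have hle : m ≤ 11 := by
    have := Nat.le_of_dvd (by norm_num) hdvd12; omega
  obtain ⟨t, htpos, htsum, rfl⟩ := quot m hm.pos _ hpos hdvd
  interval_cases m
  · -- m = 2
    refine ⟨by norm_num, fun _ => ?_, fun h => by omega, fun h => by omega, fun h => by omega⟩
    rcases part4 t htpos (by omega) with rfl | rfl | rfl | rfl | rfl
    · left; decide
    · right; left; decide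
    · right; right; left; decide
    · right; right; right; left; decide
    · right; right; right; right; decide
  · -- m = 3
    refine ⟨by norm_num, fun h => by omega, fun _ => ?_, fun h => by omega, fun h => by omega⟩
    rcases part3 t htpos (by omega) with rfl | rfl | rfl
    · left; decide
    · right; right; decide
    · right; left; decide
  · exact absurd hdvd12 (by decide)
  · -- m = 5
    refine ⟨by norm_num, fun h => by omega, fun h => by omega, fun _ => ?_, fun h => by omega⟩
    rcases part2 t htpos (by omega) with rfl | rfl
    · right; decide
    · left; decide
  · exact absurd hdvd12 (by decide)
  · exact absurd hdvd12 (by decide)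
  · exact absurd hdvd12 (by decide)
  · exact absurd hdvd12 (by decide)
  · exact absurd hdvd12 (by decide)
  · -- m = 11
    refine ⟨by norm_num, fun h => by omega, fun h => by omega, fun h => by omega, fun _ => ?_⟩
    have := part1 t htpos (by omega)
    subst this; decide
end
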